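/- In a finite-horizon tabular MDP with minimal positive suboptimality gap Δ_min, for any sequence of deterministic policies π₁,...,π_k there exists a sequence of deterministic optimal policies π₁*,...,π_k* such that for all h, s_h, a_h: ∑_{k̃=1}^k d^{π_{k̃}}(s_h,a_h) ≥ ∑_{k̃=1}^k d^{π*_{k̃}}(s_h,a_h) − (1/Δ_min)·∑_{k̃=1}^k (V₁*(s₁) − V₁^{π_{k̃}}(s₁)). -/

import Mathlib

open Finset MeasureTheory Classical
open scoped Classical

/-- A finite-horizon tabular MDP with horizon `H`, fixed initial state `s0`,
time-dependent transition kernel `P` and deterministic rewards `r` in `[0,1]`.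
Steps are indexed `1, …, H` (so value functions live on `1, …, H+1`). -/
structure TabMDP (S A : Type) [Fintype S] [Fintype A] where
  H : ℕ
  s0 : S
  P : ℕ → S → A → S → ℝ
  r : ℕ → S → A → ℝ
  P_nonneg : ∀ h s a s', 0 ≤ P h s a s'
  P_sum_one : ∀ h s a, ∑ s', P h s a s' = 1
  r_nonneg : ∀ h s a, 0 ≤ r h s a
  r_le_one : ∀ h s a, r h s a ≤ 1

namespace TabMDP

variable {S A : Type} [Fintype S] [Nonempty S] [Fintype A] [Nonempty A]

/-- Value function of a deterministic policy, computed with `n` remaining steps starting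
at step `h`: `Vfuel M π n h s = E_π[∑_{h'=h}^{h+n-1} r(s_{h'},a_{h'}) | s_h = s]`. -/
noncomputable def Vfuel (M : TabMDP S A) (π : ℕ → S → A) : ℕ → ℕ → S → ℝ
  | 0, _, _ => 0
  | n + 1, h, s =>
      M.r h s (π h s) + ∑ s', M.P h s (π h s) s' * Vfuel M π n (h + 1) s'

/-- `V M π h s = V^π_h(s)`, for `1 ≤ h ≤ H+1`. -/
noncomputable def V (M : TabMDP S A) (π : ℕ → S → A) (h : ℕ) (s : S) : ℝ :=
  Vfuel M π (M.H + 1 - h) h s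

/-- Q-function of a deterministic policy. -/
noncomputable def Q (M : TabMDP S A) (π : ℕ → S → A) (h : ℕ) (s : S) (a : A) : ℝ :=
  M.r h s a + ∑ s', M.P h s a s' * V M π (h + 1) s'

/-- Optimal value function with `n` remaining steps. -/
noncomputable def VstarFuel (M : TabMDP S A) : ℕ → ℕ → S → ℝ
  | 0, _, _ => 0
  | n + 1, h, s =>
      ⨆ a : A, (M.r h s a + ∑ s', M.P h s a s' * VstarFuel M n (h + 1) s')

/-- `Vstar M h s = V^*_h(s)`. -/
noncomputable def Vstar (M : TabMDP S A) (h : ℕ) (s : S) : ℝ :=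
  VstarFuel M (M.H + 1 - h) h s

/-- Optimal Q-function `Q^*_h(s,a)`. -/
noncomputable def Qstar (M : TabMDP S A) (h : ℕ) (s : S) (a : A) : ℝ :=
  M.r h s a + ∑ s', M.P h s a s' * Vstar M (h + 1) s'

/-- Suboptimality gap `Δ_h(s,a) = V^*_h(s) - Q^*_h(s,a)`. -/
noncomputable def gap (M : TabMDP S A) (h : ℕ) (s : S) (a : A) : ℝ :=
  Vstar M h s - Qstar M h s a

/-- A deterministic policy is optimal if it achieves the optimal value at the initial state. -/
def IsOptimal (M : TabMDP S A) (π : ℕ → S → A) : Prop :=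
  V M π 1 M.s0 = Vstar M 1 M.s0

/-- State occupancy `d^π(s_h) = Pr(S_h = s_h | S_1 = s0, π)`, for `1 ≤ h ≤ H`. -/
noncomputable def stateOcc (M : TabMDP S A) (π : ℕ → S → A) : ℕ → S → ℝ
  | 0 => fun _ => 0
  | 1 => fun s => if s = M.s0 then 1 else 0
  | h + 2 => fun s' => ∑ s, stateOcc M π (h + 1) s * M.P (h + 1) s (π (h + 1) s) s'

/-- State-action occupancy `d^π(s_h, a_h)` of a deterministic policy. -/
noncomputable def occ (M : TabMDP S A) (π : ℕ → S → A) (h : ℕ) (s : S) (a : A) : ℝ :=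
  if π h s = a then stateOcc M π h s else 0

/-- Expected sum of a per-step function along trajectories of `π` started at `(h,s)` with
`n` remaining steps: `pathSum M π g n h s = E_π[∑_{h'=h}^{h+n-1} g(h', s_{h'}, a_{h'}) | s_h = s]`. -/
noncomputable def pathSum (M : TabMDP S A) (π : ℕ → S → A) (g : ℕ → S → A → ℝ) :
    ℕ → ℕ → S → ℝ
  | 0, _, _ => 0
  | n + 1, h, s =>
      g h s (π h s) + ∑ s', M.P h s (π h s) s' * pathSum M π g n (h + 1) s'

/-- `E_{π_k}[∑_{h'} 𝟙[Ẽ_{h'}] g(h', s_{h'})]` where `Ẽ_{h'}` is the event that step `h'` is the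
first step along the trajectory (generated by `πk`) at which `πk(s_{h'}) ≠ π(s_{h'})`;
computed by the recursion that stops and pays `g h s` at the first disagreeing state. -/
noncomputable def firstDisagreeExp (M : TabMDP S A) (πk π : ℕ → S → A) (g : ℕ → S → ℝ) :
    ℕ → ℕ → S → ℝ
  | 0, _, _ => 0
  | n + 1, h, s =>
      if πk h s ≠ π h s then g h s
      else ∑ s', M.P h s (πk h s) s' * firstDisagreeExp M πk π g n (h + 1) s'

/-- Probability, under trajectories of `πk` started at `s0` at step 1, that `πk` disagrees
with `π` at some visited state within steps `1, …, H`. -/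
noncomputable def disagreeProb (M : TabMDP S A) (πk π : ℕ → S → A) : ℝ :=
  firstDisagreeExp M πk π (fun _ _ => 1) M.H 1 M.s0

/-! ### Stochastic policies -/

/-- A stochastic policy `πs h s a` = probability of taking `a` at state `s`, step `h`. -/
def IsStochasticPolicy (πs : ℕ → S → A → ℝ) : Prop :=
  ∀ h s, (∀ a, 0 ≤ πs h s a) ∧ ∑ a, πs h s a = 1

/-- State occupancy of a stochastic policy. -/
noncomputable def stateOccS (M : TabMDP S A) (πs : ℕ → S → A → ℝ) : ℕ → S → ℝ
  | 0 => fun _ => 0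
  | 1 => fun s => if s = M.s0 then 1 else 0
  | h + 2 => fun s' =>
      ∑ s, ∑ a, stateOccS M πs (h + 1) s * πs (h + 1) s a * M.P (h + 1) s a s'

/-- State-action occupancy of a stochastic policy. -/
noncomputable def occS (M : TabMDP S A) (πs : ℕ → S → A → ℝ) (h : ℕ) (s : S) (a : A) : ℝ :=
  stateOccS M πs h s * πs h s a

/-- Value function of a stochastic policy (with fuel). -/
noncomputable def VSfuel (M : TabMDP S A) (πs : ℕ → S → A → ℝ) : ℕ → ℕ → S → ℝ
  | 0, _, _ => 0
  | n + 1, h, s =>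
      ∑ a, πs h s a * (M.r h s a + ∑ s', M.P h s a s' * VSfuel M πs n (h + 1) s')

/-- Value of a stochastic policy. -/
noncomputable def VS (M : TabMDP S A) (πs : ℕ → S → A → ℝ) (h : ℕ) (s : S) : ℝ :=
  VSfuel M πs (M.H + 1 - h) h s

/-- A stochastic policy is optimal if it achieves the optimal value at the initial state. -/
def IsOptimalS (M : TabMDP S A) (πs : ℕ → S → A → ℝ) : Prop :=
  VS M πs 1 M.s0 = Vstar M 1 M.s0

/-- `d^*_{h,min}(s_h,a_h)`: the minimal positive occupancy of `(s_h,a_h)` over deterministic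
optimal policies that reach `(s_h, a_h)`. -/
noncomputable def dhmin (M : TabMDP S A) (h : ℕ) (s : S) (a : A) : ℝ :=
  sInf {x : ℝ | ∃ π : ℕ → S → A, IsOptimal M π ∧ occ M π h s a = x ∧ 0 < x}

/-- `Z_{h,div}`: state-action pairs whose state is reachable by some deterministic optimal
policy but unreachable by some other deterministic optimal policy. -/
def Zdiv (M : TabMDP S A) (h : ℕ) : Set (S × A) :=
  {p | ∃ π π' : ℕ → S → A, IsOptimal M π ∧ IsOptimal M π' ∧
        0 < stateOcc M π h p.1 ∧ stateOcc M π' h p.1 = 0}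

/-! ### Pessimistic value iteration -/

/-- PVI pessimistic value estimate (with fuel), given the empirical model `Phat` and
bonus `b`:  `V̂_h(s) = max_a max{r(s,a) + P̂_h V̂_{h+1}(s,a) - b_h(s,a), 0}`. -/
noncomputable def VhatFuel (M : TabMDP S A) (Phat : ℕ → S → A → S → ℝ)
    (b : ℕ → S → A → ℝ) : ℕ → ℕ → S → ℝ
  | 0, _, _ => 0
  | n + 1, h, s =>
      ⨆ a : A,
        max (M.r h s a + (∑ s', Phat h s a s' * VhatFuel M Phat b n (h + 1) s') - b h s a) 0

/-- `V̂_h(s)`, the PVI pessimistic value estimate. -/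
noncomputable def Vhat (M : TabMDP S A) (Phat : ℕ → S → A → S → ℝ)
    (b : ℕ → S → A → ℝ) (h : ℕ) (s : S) : ℝ :=
  VhatFuel M Phat b (M.H + 1 - h) h s

/-- `Q̂_h(s,a) = max{r(s,a) + P̂_h V̂_{h+1}(s,a) - b_h(s,a), 0}`, the PVI pessimistic
Q estimate. -/
noncomputable def Qhat (M : TabMDP S A) (Phat : ℕ → S → A → S → ℝ)
    (b : ℕ → S → A → ℝ) (h : ℕ) (s : S) (a : A) : ℝ :=
  max (M.r h s a + (∑ s', Phat h s a s' * Vhat M Phat b (h + 1) s') - b h s a) 0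

/-- PVI surplus `E_h(s,a) := r(s,a) + P_h V̂_{h+1}(s,a) - Q̂_h(s,a)`. -/
noncomputable def surplus (M : TabMDP S A) (Phat : ℕ → S → A → S → ℝ)
    (b : ℕ → S → A → ℝ) (h : ℕ) (s : S) (a : A) : ℝ :=
  M.r h s a + (∑ s', M.P h s a s' * Vhat M Phat b (h + 1) s') - Qhat M Phat b h s a

/-- Value of a deterministic policy for the reward `r - Ebar` (clipped-surplus value `V̈`),
with fuel. -/
noncomputable def VclipFuel (M : TabMDP S A) (π : ℕ → S → A) (Ebar : ℕ → S → A → ℝ) :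
    ℕ → ℕ → S → ℝ
  | 0, _, _ => 0
  | n + 1, h, s =>
      (M.r h s (π h s) - Ebar h s (π h s)) +
        ∑ s', M.P h s (π h s) s' * VclipFuel M π Ebar n (h + 1) s'

/-- `V̈^π_h(s)`: value of `π` when the reward is reduced by `Ebar`. -/
noncomputable def Vclip (M : TabMDP S A) (π : ℕ → S → A) (Ebar : ℕ → S → A → ℝ)
    (h : ℕ) (s : S) : ℝ :=
  VclipFuel M π Ebar (M.H + 1 - h) h s

end TabMDP

/-- `Clip[x | ε] := x · 𝟙[x ≥ ε]`. -/
noncomputable def clip (x ε : ℝ) : ℝ := if ε ≤ x then x else 0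

namespace TabMDP

variable {S A : Type} [Fintype S] [Nonempty S] [Fintype A] [Nonempty A]

private lemma bddA (f : A → ℝ) : BddAbove (Set.range f) := (Set.finite_range f).bddAbove

lemma stateOcc_nonneg' (M : TabMDP S A) (π : ℕ → S → A) : ∀ h s, 0 ≤ M.stateOcc π h s := by
  intro h
  induction h using Nat.strong_induction_on with
  | _ h ih =>
    match h with
    | 0 => intro s; simp [stateOcc]
    | 1 => intro s; simp only [stateOcc]; split <;> norm_num
    | (m+2) =>
      intro s'
      simp only [stateOcc]
      exact Finset.sum_nonneg fun s _ =>
        mul_nonneg (ih (m+1) (by omega) s) (M.P_nonneg _ _ _ _)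

lemma occ_nonneg' (M : TabMDP S A) (π : ℕ → S → A) (h : ℕ) (s : S) (a : A) :
    0 ≤ M.occ π h s a := by
  unfold occ; split
  · exact stateOcc_nonneg' M π h s
  · exact le_refl 0

lemma Vfuel_le_VstarFuel' (M : TabMDP S A) (π : ℕ → S → A) :
    ∀ n h s, M.Vfuel π n h s ≤ M.VstarFuel n h s := by
  intro n
  induction n with
  | zero => intro h s; simp [Vfuel, VstarFuel]
  | succ n ih =>
    intro h s
    show M.r h s (π h s) + ∑ s', M.P h s (π h s) s' * M.Vfuel π n (h+1) s'
        ≤ ⨆ a, (M.r h s a + ∑ s', M.P h s a s' * M.VstarFuel n (h+1) s')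
    refine le_trans ?_ (le_ciSup (bddA _) (π h s))
    refine add_le_add le_rfl (Finset.sum_le_sum fun s' _ => ?_)
    exact mul_le_mul_of_nonneg_left (ih (h+1) s') (M.P_nonneg _ _ _ _)

lemma V_le_Vstar' (M : TabMDP S A) (π : ℕ → S → A) (h : ℕ) (s : S) :
    M.V π h s ≤ M.Vstar h s :=
  Vfuel_le_VstarFuel' M π _ h s

lemma Vstar_eq_sup (M : TabMDP S A) {h : ℕ} (hh : h ≤ M.H) (s : S) :
    M.Vstar h s = ⨆ a, M.Qstar h s a := by
  have e1 : M.H + 1 - h = (M.H - h) + 1 := by omega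
  have e2 : M.H + 1 - (h+1) = M.H - h := by omega
  have hq : ∀ a, M.Qstar h s a
      = M.r h s a + ∑ s', M.P h s a s' * M.VstarFuel (M.H - h) (h+1) s' := by
    intro a; unfold Qstar Vstar; rw [e2]
  simp only [hq]
  unfold Vstar; rw [e1]
  rfl

lemma Qstar_le_Vstar' (M : TabMDP S A) {h : ℕ} (hh : h ≤ M.H) (s : S) (a : A) :
    M.Qstar h s a ≤ M.Vstar h s := by
  rw [Vstar_eq_sup M hh s]
  exact le_ciSup (bddA _) a

lemma gap_nonneg' (M : TabMDP S A) {h : ℕ} (hh : h ≤ M.H) (s : S) (a : A) :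
    0 ≤ M.gap h s a := by
  have := Qstar_le_Vstar' M hh s a
  unfold gap; linarith

/-- a fixed optimal action at each (h,s) -/
noncomputable def optA (M : TabMDP S A) (h : ℕ) (s : S) : A :=
  Classical.choose (Finite.exists_max (fun a => M.Qstar h s a))

lemma optA_spec (M : TabMDP S A) (h : ℕ) (s : S) (a : A) :
    M.Qstar h s a ≤ M.Qstar h s (M.optA h s) :=
  Classical.choose_spec (Finite.exists_max (fun a => M.Qstar h s a)) a

lemma Qstar_optA (M : TabMDP S A) {h : ℕ} (hh : h ≤ M.H) (s : S) :
    M.Qstar h s (M.optA h s) = M.Vstar h s := by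
  refine le_antisymm (Qstar_le_Vstar' M hh s _) ?_
  rw [Vstar_eq_sup M hh s]
  exact ciSup_le fun a => optA_spec M h s a

lemma greedy_opt (M : TabMDP S A) (π' : ℕ → S → A)
    (hg : ∀ h s, h ≤ M.H → M.Qstar h s (π' h s) = M.Vstar h s) :
    ∀ n h, h + n = M.H + 1 → ∀ s, M.Vfuel π' n h s = M.VstarFuel n h s := by
  intro n
  induction n with
  | zero => intro h _ s; simp [Vfuel, VstarFuel]
  | succ n ih =>
    intro h hh s
    have hHh : h ≤ M.H := by omega
    have e2 : M.H + 1 - (h+1) = n := by omega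
    have e1 : M.H + 1 - h = n + 1 := by omega
    have hv : ∀ s', M.Vfuel π' n (h+1) s' = M.VstarFuel n (h+1) s' :=
      ih (h+1) (by omega)
    have key : M.Vfuel π' (n+1) h s = M.Qstar h s (π' h s) := by
      show M.r h s (π' h s) + ∑ s', M.P h s (π' h s) s' * M.Vfuel π' n (h+1) s' = _
      unfold Qstar Vstar
      rw [e2]
      simp only [hv]
    rw [key, hg h s hHh]
    unfold Vstar
    rw [e1]

lemma V_step (M : TabMDP S A) (π : ℕ → S → A) {h : ℕ} (hh : h ≤ M.H) (s : S) :
    M.V π h s = M.r h s (π h s) + ∑ s', M.P h s (π h s) s' * M.V π (h+1) s' := by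
  have e1 : M.H + 1 - h = (M.H - h) + 1 := by omega
  have e2 : M.H + 1 - (h+1) = M.H - h := by omega
  unfold V; rw [e1, e2]; rfl

lemma stateOcc_step (M : TabMDP S A) (π : ℕ → S → A) {h : ℕ} (hh : 1 ≤ h) (s' : S) :
    M.stateOcc π (h+1) s' = ∑ s, M.stateOcc π h s * M.P h s (π h s) s' := by
  obtain ⟨m, rfl⟩ := Nat.exists_eq_add_of_le' hh
  rfl

lemma vdiff_step (M : TabMDP S A) (π : ℕ → S → A) {h : ℕ} (hh : h ≤ M.H) (s : S) :
    M.Vstar h s - M.V π h s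
      = M.gap h s (π h s)
        + ∑ s', M.P h s (π h s) s' * (M.Vstar (h+1) s' - M.V π (h+1) s') := by
  have h1 : M.Vstar h s = M.gap h s (π h s) + M.Qstar h s (π h s) := by unfold gap; ring
  rw [h1, V_step M π hh s]
  unfold Qstar
  simp only [mul_sub, Finset.sum_sub_distrib]
  ring

lemma G_step (M : TabMDP S A) (π : ℕ → S → A) {h : ℕ} (h1 : 1 ≤ h) (hH : h ≤ M.H) :
    ∑ s, M.stateOcc π h s * (M.Vstar h s - M.V π h s)
      = (∑ s, M.stateOcc π h s * M.gap h s (π h s))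
        + ∑ s', M.stateOcc π (h+1) s' * (M.Vstar (h+1) s' - M.V π (h+1) s') := by
  calc ∑ s, M.stateOcc π h s * (M.Vstar h s - M.V π h s)
      = ∑ s, (M.stateOcc π h s * M.gap h s (π h s)
          + ∑ s', (M.stateOcc π h s * M.P h s (π h s) s')
              * (M.Vstar (h+1) s' - M.V π (h+1) s')) := by
        refine Finset.sum_congr rfl fun s _ => ?_
        rw [vdiff_step M π hH s, mul_add, Finset.mul_sum]
        simp only [mul_assoc]
    _ = (∑ s, M.stateOcc π h s * M.gap h s (π h s))
        + ∑ s, ∑ s', (M.stateOcc π h s * M.P h s (π h s) s')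
            * (M.Vstar (h+1) s' - M.V π (h+1) s') := Finset.sum_add_distrib
    _ = _ := by
        congr 1
        rw [Finset.sum_comm]
        refine Finset.sum_congr rfl fun s' _ => ?_
        rw [stateOcc_step M π h1 s', Finset.sum_mul]

lemma G_one (M : TabMDP S A) (π : ℕ → S → A) :
    ∑ s, M.stateOcc π 1 s * (M.Vstar 1 s - M.V π 1 s)
      = M.Vstar 1 M.s0 - M.V π 1 M.s0 := by
  have h0 : ∀ s : S, M.stateOcc π 1 s = if s = M.s0 then 1 else 0 := fun s => rfl
  simp only [h0, ite_mul, one_mul, zero_mul]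
  rw [Finset.sum_ite_eq' Finset.univ M.s0]
  simp

lemma cumulative (M : TabMDP S A) (π : ℕ → S → A) :
    ∀ h, 1 ≤ h → h ≤ M.H + 1 →
    M.Vstar 1 M.s0 - M.V π 1 M.s0
      = (∑ h' ∈ Finset.Ico 1 h, ∑ s, M.stateOcc π h' s * M.gap h' s (π h' s))
        + ∑ s, M.stateOcc π h s * (M.Vstar h s - M.V π h s) := by
  intro h h1
  induction h, h1 using Nat.le_induction with
  | base => intro _; simp [G_one M π]
  | succ h h1 ih =>
    intro hH
    have hH' : h ≤ M.H := by omega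
    rw [Finset.sum_Ico_succ_top h1, add_assoc, ← G_step M π h1 hH']
    exact ih (by omega)

lemma regret_ge (M : TabMDP S A) (π : ℕ → S → A) {h : ℕ} (h1 : 1 ≤ h) (hH : h ≤ M.H) :
    ∑ h' ∈ Finset.Icc 1 h, ∑ s, M.stateOcc π h' s * M.gap h' s (π h' s)
      ≤ M.Vstar 1 M.s0 - M.V π 1 M.s0 := by
  have hc := cumulative M π (h+1) (by omega) (by omega)
  have hIco : Finset.Ico 1 (h+1) = Finset.Icc 1 h := rfl
  have hG : 0 ≤ ∑ s, M.stateOcc π (h+1) s * (M.Vstar (h+1) s - M.V π (h+1) s) :=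
    Finset.sum_nonneg fun s _ =>
      mul_nonneg (stateOcc_nonneg' M π _ s) (by linarith [V_le_Vstar' M π (h+1) s])
  rw [hIco] at hc
  linarith

/-- Occupancy of trajectories on which `π` has agreed with `π'` at all previous steps. -/
noncomputable def agreeOcc (M : TabMDP S A) (π π' : ℕ → S → A) : ℕ → S → ℝ
  | 0 => fun _ => 0
  | 1 => fun s => if s = M.s0 then 1 else 0
  | h + 2 => fun s' => ∑ s,
      (if π (h+1) s = π' (h+1) s
        then agreeOcc M π π' (h+1) s * M.P (h+1) s (π (h+1) s) s' else 0)

lemma agreeOcc_step (M : TabMDP S A) (π π' : ℕ → S → A) {h : ℕ} (hh : 1 ≤ h) (s' : S) :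
    agreeOcc M π π' (h+1) s' = ∑ s,
      (if π h s = π' h s then agreeOcc M π π' h s * M.P h s (π h s) s' else 0) := by
  obtain ⟨m, rfl⟩ := Nat.exists_eq_add_of_le' hh
  rfl

lemma agreeOcc_nonneg (M : TabMDP S A) (π π' : ℕ → S → A) :
    ∀ h s, 0 ≤ agreeOcc M π π' h s := by
  intro h
  induction h using Nat.strong_induction_on with
  | _ h ih =>
    match h with
    | 0 => intro s; simp [agreeOcc]
    | 1 => intro s; simp only [agreeOcc]; split <;> norm_num
    | (m+2) =>
      intro s'
      simp only [agreeOcc]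
      refine Finset.sum_nonneg fun s _ => ?_
      split
      · exact mul_nonneg (ih (m+1) (by omega) s) (M.P_nonneg _ _ _ _)
      · exact le_refl 0

lemma agreeOcc_le_left (M : TabMDP S A) (π π' : ℕ → S → A) :
    ∀ h s, agreeOcc M π π' h s ≤ M.stateOcc π h s := by
  intro h
  induction h using Nat.strong_induction_on with
  | _ h ih =>
    match h with
    | 0 => intro s; simp [agreeOcc, stateOcc]
    | 1 => intro s; simp [agreeOcc, stateOcc]
    | (m+2) =>
      intro s'
      simp only [agreeOcc, stateOcc]
      refine Finset.sum_le_sum fun s _ => ?_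
      split
      · exact mul_le_mul_of_nonneg_right (ih (m+1) (by omega) s) (M.P_nonneg _ _ _ _)
      · exact mul_nonneg (stateOcc_nonneg' M π _ s) (M.P_nonneg _ _ _ _)

lemma agreeOcc_le_right (M : TabMDP S A) (π π' : ℕ → S → A) :
    ∀ h s, agreeOcc M π π' h s ≤ M.stateOcc π' h s := by
  intro h
  induction h using Nat.strong_induction_on with
  | _ h ih =>
    match h with
    | 0 => intro s; simp [agreeOcc, stateOcc]
    | 1 => intro s; simp [agreeOcc, stateOcc]
    | (m+2) =>
      intro s'
      simp only [agreeOcc, stateOcc]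
      refine Finset.sum_le_sum fun s _ => ?_
      split
      · rename_i hc
        rw [hc]
        exact mul_le_mul_of_nonneg_right (ih (m+1) (by omega) s) (M.P_nonneg _ _ _ _)
      · exact mul_nonneg (stateOcc_nonneg' M π' _ s) (M.P_nonneg _ _ _ _)

/-- Telescoping: total missing mass equals accumulated first-disagreement mass. -/
lemma agree_sum (M : TabMDP S A) (π π' : ℕ → S → A) :
    ∀ h, 1 ≤ h →
    ∑ s, (M.stateOcc π' h s - agreeOcc M π π' h s)
      = ∑ h' ∈ Finset.Ico 1 h,
          ∑ s, (if π h' s = π' h' s then (0:ℝ) else agreeOcc M π π' h' s) := by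
  intro h h1
  induction h, h1 using Nat.le_induction with
  | base =>
    have : ∀ s : S, M.stateOcc π' 1 s - agreeOcc M π π' 1 s = 0 := by
      intro s
      show (if s = M.s0 then (1:ℝ) else 0) - (if s = M.s0 then (1:ℝ) else 0) = 0
      ring
    simp [this]
  | succ h h1 ih =>
    rw [Finset.sum_Ico_succ_top h1, ← ih]
    calc ∑ s', (M.stateOcc π' (h+1) s' - agreeOcc M π π' (h+1) s')
        = ∑ s', ∑ s, (M.stateOcc π' h s * M.P h s (π' h s) s'
            - (if π h s = π' h s then agreeOcc M π π' h s * M.P h s (π h s) s' else 0)) := by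
          refine Finset.sum_congr rfl fun s' _ => ?_
          rw [stateOcc_step M π' h1 s', agreeOcc_step M π π' h1 s',
            Finset.sum_sub_distrib]
      _ = ∑ s, (M.stateOcc π' h s
            - (if π h s = π' h s then agreeOcc M π π' h s else 0)) := by
          rw [Finset.sum_comm]
          refine Finset.sum_congr rfl fun s _ => ?_
          rw [Finset.sum_sub_distrib]
          congr 1
          · rw [← Finset.mul_sum, M.P_sum_one, mul_one]
          · by_cases hc : π h s = π' h s <;>
              simp [hc, ← Finset.mul_sum, M.P_sum_one]
      _ = _ := by
          rw [← Finset.sum_add_distrib]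
          refine Finset.sum_congr rfl fun s _ => ?_
          by_cases hc : π h s = π' h s <;> simp [hc]

/-- The per-policy key lemma. -/
lemma key_lemma (M : TabMDP S A) (Δmin : ℝ) (hΔ : 0 < Δmin)
    (hgap : ∀ h s a, 1 ≤ h → h ≤ M.H → M.gap h s a = 0 ∨ Δmin ≤ M.gap h s a)
    (π : ℕ → S → A) :
    ∃ π' : ℕ → S → A, M.IsOptimal π' ∧ ∀ h s a, 1 ≤ h → h ≤ M.H →
      M.occ π' h s a - (1/Δmin) * (M.Vstar 1 M.s0 - M.V π 1 M.s0) ≤ M.occ π h s a := by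
  classical
  set π' : ℕ → S → A := fun h s => if M.gap h s (π h s) = 0 then π h s else M.optA h s
    with hπ'
  have hg : ∀ h s, h ≤ M.H → M.Qstar h s (π' h s) = M.Vstar h s := by
    intro h s hh
    by_cases hz : M.gap h s (π h s) = 0
    · have : π' h s = π h s := by rw [hπ']; simp [hz]
      rw [this]
      have := hz
      unfold gap at this
      linarith
    · have : π' h s = M.optA h s := by rw [hπ']; simp [hz]
      rw [this, Qstar_optA M hh s]
  have hopt : M.IsOptimal π' := by
    have := greedy_opt M π' hg M.H 1 (by omega) M.s0
    unfold IsOptimal V Vstar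
    simpa using this
  refine ⟨π', hopt, ?_⟩
  intro h s a h1 hH
  -- disagreement implies big gap
  have hdis : ∀ h' s', 1 ≤ h' → h' ≤ M.H → π h' s' ≠ π' h' s' →
      Δmin ≤ M.gap h' s' (π h' s') := by
    intro h' s' h1' hH' hne
    rcases hgap h' s' (π h' s') h1' hH' with hz | hge
    · exfalso; apply hne; rw [hπ']; simp [hz]
    · exact hge
  set c := agreeOcc M π π' with hc
  set W : ℕ → ℝ := fun h' => ∑ s, (if π h' s = π' h' s then (0:ℝ) else c h' s) with hW
  have hWnn : ∀ h', 0 ≤ W h' := by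
    intro h'
    refine Finset.sum_nonneg fun s _ => ?_
    split
    · exact le_refl 0
    · exact agreeOcc_nonneg M π π' h' s
  -- Δmin * ∑ W ≤ regret
  have hreg : Δmin * (∑ h' ∈ Finset.Icc 1 h, W h')
      ≤ M.Vstar 1 M.s0 - M.V π 1 M.s0 := by
    rw [Finset.mul_sum]
    refine le_trans (Finset.sum_le_sum fun h' hh' => ?_) (regret_ge M π h1 hH)
    rw [Finset.mem_Icc] at hh'
    obtain ⟨hl', hr'⟩ := hh'
    rw [hW, Finset.mul_sum]
    refine Finset.sum_le_sum fun s' _ => ?_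
    by_cases hcnd : π h' s' = π' h' s'
    · simp only [hcnd, if_pos, mul_zero]
      exact mul_nonneg (stateOcc_nonneg' M π h' s')
        (gap_nonneg' M (by omega) s' _)
    · simp only [hcnd, if_neg, not_false_iff]
      rw [mul_comm (M.stateOcc π h' s')]
      exact mul_le_mul (hdis h' s' hl' (by omega) hcnd)
        (agreeOcc_le_left M π π' h' s') (agreeOcc_nonneg M π π' h' s')
        (gap_nonneg' M (by omega) s' _)
  -- occ difference ≤ ∑ W over Icc 1 h
  have hBW : ∑ h' ∈ Finset.Icc 1 h, W h'
      = (∑ s, (M.stateOcc π' h s - c h s)) + W h := by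
    have : Finset.Icc 1 h = Finset.Ico 1 (h+1) := rfl
    rw [this, Finset.sum_Ico_succ_top h1, agree_sum M π π' h h1]
  have hBnn : ∀ s₀ : S, M.stateOcc π' h s₀ - c h s₀ ≤ ∑ s, (M.stateOcc π' h s - c h s) := by
    intro s₀
    refine Finset.single_le_sum (f := fun s => M.stateOcc π' h s - c h s)
      (fun s _ => sub_nonneg.mpr (agreeOcc_le_right M π π' h s)) (Finset.mem_univ s₀)
  have hdiff : M.occ π' h s a - M.occ π h s a ≤ ∑ h' ∈ Finset.Icc 1 h, W h' := by
    by_cases hpa : π' h s = a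
    · by_cases hqa : π h s = a
      · have ho1 : M.occ π' h s a = M.stateOcc π' h s := by unfold occ; rw [if_pos hpa]
        have ho2 : M.occ π h s a = M.stateOcc π h s := by unfold occ; rw [if_pos hqa]
        have hcd : c h s ≤ M.stateOcc π h s := agreeOcc_le_left M π π' h s
        have := hBnn s
        have hWh := hWnn h
        rw [ho1, ho2, hBW]
        linarith
      · have ho1 : M.occ π' h s a = M.stateOcc π' h s := by unfold occ; rw [if_pos hpa]
        have ho2 : M.occ π h s a = 0 := by unfold occ; rw [if_neg hqa]
        have hne : π h s ≠ π' h s := by rw [hpa]; exact hqa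
        have hcW : c h s ≤ W h := by
          have heq : (if π h s = π' h s then (0:ℝ) else c h s) = c h s := if_neg hne
          have hle : (if π h s = π' h s then (0:ℝ) else c h s)
              ≤ ∑ s', (if π h s' = π' h s' then (0:ℝ) else c h s') := by
            refine Finset.single_le_sum
              (f := fun s' => if π h s' = π' h s' then (0:ℝ) else c h s')
              (fun s' _ => ?_) (Finset.mem_univ s)
            show (0:ℝ) ≤ if π h s' = π' h s' then 0 else c h s'
            split
            · exact le_refl 0
            · exact agreeOcc_nonneg M π π' h s'
          rw [heq] at hle
          exact hle
        have := hBnn s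
        rw [ho1, ho2, hBW]
        linarith
    · have ho1 : M.occ π' h s a = 0 := by unfold occ; rw [if_neg hpa]
      have ho2 : 0 ≤ M.occ π h s a := occ_nonneg' M π h s a
      have hsum : 0 ≤ ∑ h' ∈ Finset.Icc 1 h, W h' :=
        Finset.sum_nonneg fun h' _ => hWnn h'
      rw [ho1]
      linarith
  have hfin : M.occ π' h s a - M.occ π h s a
      ≤ (1/Δmin) * (M.Vstar 1 M.s0 - M.V π 1 M.s0) := by
    rw [one_div, inv_mul_eq_div, le_div_iff₀' hΔ]
    calc Δmin * (M.occ π' h s a - M.occ π h s a)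
        ≤ Δmin * (∑ h' ∈ Finset.Icc 1 h, W h') := by
          exact mul_le_mul_of_nonneg_left hdiff (le_of_lt hΔ)
      _ ≤ _ := hreg
  linarith

end TabMDP

/-- In a tabular MDP with minimal positive gap `Δmin`, for any sequence of deterministic
policies `π_1, …, π_k` there exists a sequence of deterministic optimal policies
`π*_1, …, π*_k` such that for all `(h, s_h, a_h)`:
`∑_{k̃} d^{π_{k̃}}(s_h,a_h) ≥ ∑_{k̃} d^{π*_{k̃}}(s_h,a_h) − (1/Δmin) ∑_{k̃} (V₁*(s₁) − V₁^{π_{k̃}}(s₁))`. -/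
theorem accumulated_occupancy_lower_bound
    {S A : Type} [Fintype S] [Nonempty S] [Fintype A] [Nonempty A]
    (M : TabMDP S A) (Δmin : ℝ) (hΔmin : 0 < Δmin)
    (hgap : ∀ h s a, 1 ≤ h → h ≤ M.H → TabMDP.gap M h s a = 0 ∨ Δmin ≤ TabMDP.gap M h s a)
    (k : ℕ) (π : Fin k → ℕ → S → A) :
    ∃ πstar : Fin k → ℕ → S → A, (∀ i, TabMDP.IsOptimal M (πstar i)) ∧
      ∀ h s a, 1 ≤ h → h ≤ M.H →
        (∑ i, TabMDP.occ M (πstar i) h s a) -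
            (1 / Δmin) * ∑ i, (TabMDP.Vstar M 1 M.s0 - TabMDP.V M (π i) 1 M.s0) ≤
          ∑ i, TabMDP.occ M (π i) h s a := by
  choose πstar hopt hbound using fun i : Fin k => TabMDP.key_lemma M Δmin hΔmin hgap (π i)
  refine ⟨πstar, hopt, ?_⟩
  intro h s a h1 hH
  rw [Finset.mul_sum, ← Finset.sum_sub_distrib]
  exact Finset.sum_le_sum fun i _ => hbound i h s a h1 hH
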